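/- For each nonzero class a ∈ H₁(Γ; ℤ/2) of a finite graph Γ, there is a finite set S_a of loops, independent of the metric, such that for every positive length function ℓ on Γ, the minimum of ℓ over loops representing a is attained on some element of S_a. (One may take S_a to be the loops representing a that cross each edge at most twice.) -/

import Mathlib

def wordChain {E : Type*} [DecidableEq E] (w : List (E × Bool)) : E → ZMod 2 :=
  fun e => ((w.countP (fun x => x.1 = e) : ℕ) : ZMod 2)

def wordLen {E : Type*} (ℓ : E → ℝ) (w : List (E × Bool)) : ℝ :=
  (w.map (fun x => ℓ x.1)).sum

/-- Source and target of an oriented edge in a graph with endpoint maps ι, t. -/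
def src {E V : Type*} (ι t : E → V) (x : E × Bool) : V := if x.2 then ι x.1 else t x.1
def tgt {E V : Type*} (ι t : E → V) (x : E × Bool) : V := if x.2 then t x.1 else ι x.1

/-- A nonempty closed edge path: consecutive edges match up and the last
endpoint equals the first starting point. -/
def IsClosedPath {E V : Type*} (ι t : E → V) (w : List (E × Bool)) : Prop :=
  w ≠ [] ∧ w.Chain' (fun a b => tgt ι t a = src ι t b) ∧
    ∀ a b, w.getLast? = some a → w.head? = some b → tgt ι t a = src ι t b

namespace Stmt14Aux

def flipE {E : Type*} (x : E × Bool) : E × Bool := (x.1, !x.2)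

lemma src_flipE {E V : Type*} (ι t : E → V) (x : E × Bool) :
    src ι t (flipE x) = tgt ι t x := by
  obtain ⟨e, b⟩ := x; cases b <;> simp [flipE, src, tgt]

lemma tgt_flipE {E V : Type*} (ι t : E → V) (x : E × Bool) :
    tgt ι t (flipE x) = src ι t x := by
  obtain ⟨e, b⟩ := x; cases b <;> simp [flipE, src, tgt]

lemma my_head?_append {α : Type*} (l₁ l₂ : List α) (h : l₁ ≠ []) :
    (l₁ ++ l₂).head? = l₁.head? := by
  cases l₁ with
  | nil => exact absurd rfl h
  | cons a l => rfl

lemma my_getLast?_append {α : Type*} (l₁ l₂ : List α) (h : l₂ ≠ []) :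
    (l₁ ++ l₂).getLast? = l₂.getLast? := by
  rw [← List.head?_reverse, ← List.head?_reverse, List.reverse_append]
  exact my_head?_append _ _ (by simpa using h)

lemma two_count_decomp {α : Type*} [DecidableEq α] (z : α) :
    ∀ w : List α, 2 ≤ w.countP (fun x => x = z) →
      ∃ A B C, w = A ++ (z :: (B ++ (z :: C))) := by
  intro w
  induction w with
  | nil => intro h; simp at h
  | cons x w ih =>
    intro h
    rw [List.countP_cons] at h
    by_cases hx : x = z
    · have h1 : z ∈ w := by
        have hone : (if (decide (x = z)) = true then 1 else 0) = 1 := by simp [hx]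
        rw [hone] at h
        have hpos : 0 < w.countP (fun y => y = z) := by omega
        obtain ⟨a, haw, hap⟩ := List.countP_pos_iff.mp hpos
        have : a = z := by simpa using hap
        rwa [← this]
      obtain ⟨B, C, rfl⟩ := List.append_of_mem h1
      exact ⟨[], B, C, by simp [hx]⟩
    · have hzero : (if (decide (x = z)) = true then 1 else 0) = 0 := by simp [hx]
      rw [hzero, add_zero] at h
      obtain ⟨A, B, C, rfl⟩ := ih h
      exact ⟨x :: A, B, C, by simp⟩

lemma countP_le_counts {E : Type*} [DecidableEq E] (e : E) :
    ∀ w : List (E × Bool),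
      w.countP (fun x => x.1 = e) ≤ w.countP (fun x => x = (e, true)) +
        w.countP (fun x => x = (e, false)) := by
  intro w
  induction w with
  | nil => simp
  | cons x w ih =>
    obtain ⟨f, b⟩ := x
    rw [List.countP_cons, List.countP_cons, List.countP_cons]
    by_cases hf : f = e
    · subst hf
      cases b <;> simp <;> omega
    · have e1 : (decide ((f, b) = (e, true))) = false := by simp [hf]
      have e2 : (decide ((f, b) = (e, false))) = false := by simp [hf]
      have e3 : (decide ((f, b).1 = e)) = false := by simp [hf]
      rw [e1, e2, e3]
      simp only [Bool.false_eq_true, if_false, add_zero]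
      exact ih

lemma surgery {E V : Type*} [DecidableEq E] (ι t : E → V) (w : List (E × Bool))
    (hw : IsClosedPath ι t w) (hne : wordChain w ≠ 0) (e : E)
    (h3 : 3 ≤ w.countP (fun x => x.1 = e)) :
    ∃ w' : List (E × Bool), IsClosedPath ι t w' ∧ wordChain w' = wordChain w ∧
      w'.length + 2 = w.length ∧
      ∀ ℓ : E → ℝ, (∀ f, 0 ≤ ℓ f) → wordLen ℓ w' ≤ wordLen ℓ w := by
  obtain ⟨hwne, hchain, hcyc⟩ := hw
  have hb : ∃ b : Bool, 2 ≤ w.countP (fun x => x = (e, b)) := by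
    have := countP_le_counts e w
    by_contra hcon
    push_neg at hcon
    have h1 := hcon true; have h2 := hcon false
    omega
  obtain ⟨b, hb⟩ := hb
  obtain ⟨A, B, C, rfl⟩ := two_count_decomp (e, b) w hb
  set z : E × Bool := (e, b) with hz
  set D : List (E × Bool) := (B.map flipE).reverse with hD
  have hDnil : D = [] ↔ B = [] := by
    rw [hD, List.reverse_eq_nil_iff, List.map_eq_nil_iff]
  -- extract chain facts
  unfold List.Chain' at hchain
  rw [List.isChain_append] at hchain
  obtain ⟨hA, hrest, hlinkA⟩ := hchain
  rw [List.isChain_cons] at hrest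
  obtain ⟨h1, hBC⟩ := hrest
  rw [List.isChain_append] at hBC
  obtain ⟨hB, hzC, h2⟩ := hBC
  rw [List.isChain_cons] at hzC
  obtain ⟨h3', hC⟩ := hzC
  have hlinkA' : ∀ x ∈ A.getLast?, tgt ι t x = src ι t z := fun x hx => hlinkA x hx z rfl
  have h2' : ∀ x ∈ B.getLast?, tgt ι t x = src ι t z := fun x hx => h2 x hx z rfl
  have hzz : B = [] → tgt ι t z = src ι t z := by
    intro hB0; exact h1 z (by simp [hB0])
  have hzB : ∀ y ∈ B.head?, tgt ι t z = src ι t y := by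
    intro y hy
    apply h1
    rw [my_head?_append _ _ (by rintro rfl; simp at hy)]
    exact hy
  -- chain for D
  have hDchain : List.Chain' (fun a b => tgt ι t a = src ι t b) D := by
    unfold List.Chain'
    rw [hD, List.isChain_reverse, List.isChain_map]
    exact List.IsChain.imp (fun a c hac => by
      show tgt ι t (flipE c) = src ι t (flipE a)
      rw [tgt_flipE, src_flipE, hac]) hB
  have hDhead : ∀ y ∈ D.head?, src ι t y = src ι t z := by
    intro y hy
    rw [hD, List.head?_reverse, List.getLast?_map] at hy
    obtain ⟨x, hx, rfl⟩ := Option.map_eq_some_iff.mp hy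
    rw [src_flipE]
    exact h2' x hx
  have hDlast : ∀ x ∈ D.getLast?, tgt ι t x = tgt ι t z := by
    intro x hx
    rw [hD, List.getLast?_reverse, List.head?_map] at hx
    obtain ⟨y, hy, rfl⟩ := Option.map_eq_some_iff.mp hx
    rw [tgt_flipE]
    exact (hzB y hy).symm
  have hheadF : ∀ y ∈ (D ++ C).head?, src ι t y = src ι t z := by
    intro y hy
    by_cases hD0 : D = []
    · rw [hD0, List.nil_append] at hy
      have hB0 : B = [] := hDnil.mp hD0
      rw [← h3' y hy, hzz hB0]
    · rw [my_head?_append _ _ hD0] at hy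
      exact hDhead y hy
  refine ⟨A ++ (D ++ C), ⟨?_, ?_, ?_⟩, ?_, ?_, ?_⟩
  · -- nonempty
    intro hnil
    rw [List.append_eq_nil_iff, List.append_eq_nil_iff] at hnil
    obtain ⟨hA0, hD0, hC0⟩ := hnil
    have hB0 : B = [] := hDnil.mp hD0
    apply hne
    subst hA0 hB0 hC0
    funext f
    simp only [wordChain, List.nil_append, List.countP_cons, List.countP_nil]
    by_cases hef : e = f
    · subst hef; simp [hz]
      decide
    · simp [hz, hef]
  · -- chain
    unfold List.Chain'
    rw [List.isChain_append]
    refine ⟨hA, ?_, ?_⟩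
    · rw [List.isChain_append]
      refine ⟨hDchain, hC, ?_⟩
      intro x hx y hy
      rw [hDlast x hx]
      exact h3' y hy
    · intro x hx y hy
      rw [hlinkA' x hx, ← hheadF y hy]
  · -- cyclic
    intro p q hp hq
    have Hq : ∃ q₀, (A ++ (z :: (B ++ (z :: C)))).head? = some q₀ ∧
        src ι t q = src ι t q₀ := by
      by_cases hA0 : A = []
      · refine ⟨z, by simp [hA0], ?_⟩
        rw [hA0, List.nil_append] at hq
        exact hheadF q hq
      · rw [my_head?_append _ _ hA0] at hq
        exact ⟨q, by rw [my_head?_append _ _ hA0]; exact hq, rfl⟩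
    have Hp : ∃ p₀, (A ++ (z :: (B ++ (z :: C)))).getLast? = some p₀ ∧
        tgt ι t p = tgt ι t p₀ := by
      by_cases hC0 : C = []
      · have hwlast : (A ++ (z :: (B ++ (z :: C)))).getLast? = some z := by
          rw [my_getLast?_append _ _ (by simp), hC0,
            show z :: (B ++ [z]) = (z :: B) ++ [z] by simp,
            my_getLast?_append _ _ (by simp)]
          rfl
        refine ⟨z, hwlast, ?_⟩
        rw [hC0, List.append_nil] at hp
        by_cases hD0 : D = []
        · rw [hD0, List.append_nil] at hp
          have hB0 : B = [] := hDnil.mp hD0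
          rw [hlinkA' p hp, hzz hB0]
        · rw [my_getLast?_append _ _ hD0] at hp
          exact hDlast p hp
      · have hwlast : (A ++ (z :: (B ++ (z :: C)))).getLast? = C.getLast? := by
          rw [my_getLast?_append _ _ (by simp),
            show z :: (B ++ (z :: C)) = (z :: (B ++ [z])) ++ C by simp,
            my_getLast?_append _ _ hC0]
        have hplast : C.getLast? = some p := by
          rw [my_getLast?_append _ _ (by simp [hC0]),
            my_getLast?_append _ _ hC0] at hp
          exact hp
        exact ⟨p, by rw [hwlast, hplast], rfl⟩
    obtain ⟨p₀, hp₀, htp⟩ := Hp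
    obtain ⟨q₀, hq₀, hsq⟩ := Hq
    rw [htp, hsq]
    exact hcyc p₀ q₀ hp₀ hq₀
  · -- wordChain
    have hcnt : ∀ f : E, (A ++ (z :: (B ++ (z :: C)))).countP (fun x => x.1 = f) =
        (A ++ (D ++ C)).countP (fun x => x.1 = f) + if e = f then 2 else 0 := by
      intro f
      have hDcnt : D.countP (fun x => x.1 = f) = B.countP (fun x => x.1 = f) := by
        rw [hD, List.countP_reverse, List.countP_map]
        congr 1
      simp only [List.countP_append, List.countP_cons, hDcnt]
      by_cases hef : e = f
      · subst hef; simp [hz]; omega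
      · have : (decide (z.1 = f)) = false := by simp [hz, hef]
        simp [this, hef]
    funext f
    simp only [wordChain, hcnt f]
    by_cases hef : e = f
    · simp only [hef, if_pos rfl]
      push_cast
      have : ((2 : ℕ) : ZMod 2) = 0 := by decide
      push_cast at this
      rw [this, add_zero]
    · simp [hef]
  · -- length
    simp only [List.length_append, List.length_cons, hD, List.length_reverse,
      List.length_map]
    omega
  · -- wordLen
    intro ℓ hl
    have hkey : wordLen ℓ (A ++ (z :: (B ++ (z :: C)))) =
        wordLen ℓ (A ++ (D ++ C)) + 2 * ℓ e := by
      simp only [wordLen, hD, List.map_append, List.sum_append, List.map_cons,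
        List.sum_cons, List.map_reverse, List.sum_reverse, List.map_map]
      have : ((fun x : E × Bool => ℓ x.1) ∘ flipE) = fun x : E × Bool => ℓ x.1 := rfl
      rw [this]
      ring
    rw [hkey]
    have := hl e
    linarith

lemma exists_good {E V : Type*} [DecidableEq E] (ι t : E → V) (ℓ : E → ℝ)
    (hl : ∀ f, 0 ≤ ℓ f) :
    ∀ n : ℕ, ∀ w : List (E × Bool), w.length ≤ n → IsClosedPath ι t w →
      wordChain w ≠ 0 →
      ∃ w', IsClosedPath ι t w' ∧ wordChain w' = wordChain w ∧
        (∀ e, w'.countP (fun x => x.1 = e) ≤ 2) ∧ wordLen ℓ w' ≤ wordLen ℓ w := by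
  intro n
  induction n with
  | zero =>
    intro w hlen hw _
    exact absurd (List.length_eq_zero_iff.mp (Nat.le_zero.mp hlen)) hw.1
  | succ n ih =>
    intro w hlen hw hne
    by_cases hgood : ∀ e, w.countP (fun x => x.1 = e) ≤ 2
    · exact ⟨w, hw, rfl, hgood, le_refl _⟩
    · push_neg at hgood
      obtain ⟨e, he⟩ := hgood
      obtain ⟨w'', hw'', hch, hlen'', hle⟩ := surgery ι t w hw hne e (by omega)
      obtain ⟨w', h1, h2, h3, h4⟩ := ih w'' (by omega) hw'' (by rw [hch]; exact hne)
      exact ⟨w', h1, h2.trans hch, h3, h4.trans (hle ℓ hl)⟩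

lemma length_eq_sum {E : Type*} [Fintype E] [DecidableEq E] (w : List (E × Bool)) :
    w.length = ∑ e : E, w.countP (fun x => x.1 = e) := by
  induction w with
  | nil => simp
  | cons x w ih =>
    simp only [List.length_cons, List.countP_cons, ih]
    rw [Finset.sum_add_distrib]
    congr 1
    rw [show (1 : ℕ) = ∑ e : E, if x.1 = e then 1 else 0 by
      rw [Finset.sum_ite_eq]; simp]
    apply Finset.sum_congr rfl
    intro e _
    by_cases hx : x.1 = e <;> simp [hx]

end Stmt14Aux

/-- For each represented class a ∈ H₁(Γ;ℤ/2) the set of representatives crossing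
each edge at most twice is finite, nonempty, and contains a loop of minimal
ℓ-length among all representatives, for every positive length function ℓ. -/
theorem stmt_14 {E V : Type*} [Fintype E] [DecidableEq E] (ι t : E → V)
    (a : E → ZMod 2) (ha : a ≠ 0)
    (hrep : ∃ w : List (E × Bool), IsClosedPath ι t w ∧ wordChain w = a) :
    let S : Set (List (E × Bool)) :=
      {w | IsClosedPath ι t w ∧ wordChain w = a ∧
        ∀ e : E, w.countP (fun x => x.1 = e) ≤ 2}
    S.Finite ∧ S.Nonempty ∧
    ∀ ℓ : E → ℝ, (∀ e, 0 < ℓ e) →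
      ∃ w ∈ S, ∀ w' : List (E × Bool), IsClosedPath ι t w' → wordChain w' = a →
        wordLen ℓ w ≤ wordLen ℓ w' := by
  intro S
  have hfin : S.Finite := by
    apply Set.Finite.subset (List.finite_length_le (E × Bool) (2 * Fintype.card E))
    intro w hw
    obtain ⟨-, -, hcnt⟩ := hw
    simp only [Set.mem_setOf_eq]
    rw [Stmt14Aux.length_eq_sum w]
    calc ∑ e : E, w.countP (fun x => x.1 = e) ≤ ∑ _e : E, 2 :=
          Finset.sum_le_sum (fun e _ => hcnt e)
      _ = 2 * Fintype.card E := by simp [mul_comm]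
  have hmain : ∀ ℓ : E → ℝ, (∀ f, 0 ≤ ℓ f) → ∀ w, IsClosedPath ι t w →
      wordChain w = a → ∃ w' ∈ S, wordLen ℓ w' ≤ wordLen ℓ w := by
    intro ℓ hl w hw hwa
    obtain ⟨w', h1, h2, h3, h4⟩ := Stmt14Aux.exists_good ι t ℓ hl w.length w le_rfl hw
      (by rw [hwa]; exact ha)
    exact ⟨w', ⟨h1, by rw [h2, hwa], h3⟩, h4⟩
  obtain ⟨w₀, hw₀, ha₀⟩ := hrep
  have hnon : S.Nonempty := by
    obtain ⟨w', hw', -⟩ := hmain (fun _ => 1) (fun _ => zero_le_one) w₀ hw₀ ha₀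
    exact ⟨w', hw'⟩
  refine ⟨hfin, hnon, ?_⟩
  intro ℓ hl
  obtain ⟨w, hwS, hmin⟩ := hfin.toFinset.exists_min_image (wordLen ℓ)
    (by rwa [Set.Finite.toFinset_nonempty])
  refine ⟨w, hfin.mem_toFinset.mp hwS, ?_⟩
  intro w' hw' hwa'
  obtain ⟨w'', hw''S, hle⟩ := hmain ℓ (fun f => (hl f).le) w' hw' hwa'
  exact (hmin w'' (hfin.mem_toFinset.mpr hw''S)).trans hle
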